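/- For every d ∈ (0,1) and every integer n ≥ 2, the piecewise WENO-PM mapping function g_PM is monotonically nondecreasing on the interval [0,1]. -/

import Mathlib

open Set

private lemma hasDerivAt_piece (c d e : ℝ) (n : ℕ) (x : ℝ) :
    HasDerivAt (fun ω => c * (ω - d) ^ (n + 1) * (ω + e) + d)
      (c * (((n : ℝ) + 1) * (x - d) ^ n * (x + e) + (x - d) ^ (n + 1))) x := by
  have h1 : HasDerivAt (fun ω : ℝ => (ω - d) ^ (n + 1)) (((n : ℝ) + 1) * (x - d) ^ n) x := by
    have := ((hasDerivAt_id x).sub_const d).fun_pow (n + 1)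
    simpa using this
  have h2 : HasDerivAt (fun ω : ℝ => ω + e) 1 x := (hasDerivAt_id x).add_const e
  have h := ((h1.const_mul c).fun_mul h2).add_const d
  refine h.congr_deriv ?_
  ring

private lemma mono1 (d : ℝ) (hd0 : 0 < d) (n : ℕ) :
    MonotoneOn (fun ω => ((-1 : ℝ) ^ n * ((n : ℝ) + 1) / d ^ (n + 1)) * (ω - d) ^ (n + 1) *
      (ω + d / ((n : ℝ) + 1)) + d) (Icc 0 d) := by
  set c : ℝ := (-1 : ℝ) ^ n * ((n : ℝ) + 1) / d ^ (n + 1) with hc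
  apply monotoneOn_of_deriv_nonneg (convex_Icc 0 d)
  · exact Continuous.continuousOn (by fun_prop)
  · intro x hx
    exact (hasDerivAt_piece c d _ n x).differentiableAt.differentiableWithinAt
  · intro x hx
    rw [interior_Icc] at hx
    rw [(hasDerivAt_piece c d _ n x).deriv]
    have hdx : (d - x) ^ n = (-1 : ℝ) ^ n * (x - d) ^ n := by
      rw [← neg_pow]; ring_nf
    have key : c * (((n : ℝ) + 1) * (x - d) ^ n * (x + d / ((n : ℝ) + 1)) + (x - d) ^ (n + 1))
        = (((n : ℝ) + 1) * ((n : ℝ) + 2) / d ^ (n + 1)) * x * (d - x) ^ n := by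
      rw [hdx, hc]
      have hdne : d ^ (n + 1) ≠ 0 := pow_ne_zero _ hd0.ne'
      field_simp
      ring
    rw [key]
    have h1 : (0 : ℝ) ≤ (d - x) ^ n := pow_nonneg (by linarith [hx.2]) n
    have h2 : (0 : ℝ) ≤ ((n : ℝ) + 1) * ((n : ℝ) + 2) / d ^ (n + 1) := by positivity
    exact mul_nonneg (mul_nonneg h2 hx.1.le) h1

private lemma mono2 (d : ℝ) (hd1 : d < 1) (n : ℕ) :
    MonotoneOn (fun ω => (-((n : ℝ) + 1) / (1 - d) ^ (n + 1)) * (ω - d) ^ (n + 1) *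
      (ω + (d - (n : ℝ) - 2) / ((n : ℝ) + 1)) + d) (Icc d 1) := by
  set c : ℝ := -((n : ℝ) + 1) / (1 - d) ^ (n + 1) with hc
  apply monotoneOn_of_deriv_nonneg (convex_Icc d 1)
  · exact Continuous.continuousOn (by fun_prop)
  · intro x hx
    exact (hasDerivAt_piece c d _ n x).differentiableAt.differentiableWithinAt
  · intro x hx
    rw [interior_Icc] at hx
    rw [(hasDerivAt_piece c d _ n x).deriv]
    have key : c * (((n : ℝ) + 1) * (x - d) ^ n * (x + (d - (n : ℝ) - 2) / ((n : ℝ) + 1))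
          + (x - d) ^ (n + 1))
        = (((n : ℝ) + 1) * ((n : ℝ) + 2) / (1 - d) ^ (n + 1)) * (x - d) ^ n * (1 - x) := by
      rw [hc]
      have hdne : (1 - d) ^ (n + 1) ≠ 0 := pow_ne_zero _ (by linarith)
      field_simp
      ring
    rw [key]
    have h1 : (0 : ℝ) ≤ (x - d) ^ n := pow_nonneg (by linarith [hx.1]) n
    have hpos : (0 : ℝ) < 1 - d := by linarith
    have h2 : (0 : ℝ) ≤ ((n : ℝ) + 1) * ((n : ℝ) + 2) / (1 - d) ^ (n + 1) := by positivity
    exact mul_nonneg (mul_nonneg h2 h1) (by linarith [hx.2])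

/-- For every `d ∈ (0,1)` and every integer `n ≥ 2`, the piecewise
WENO-PM mapping function is monotonically nondecreasing on `[0,1]`. -/
theorem stmt4 (d : ℝ) (hd : d ∈ Set.Ioo (0 : ℝ) 1) (n : ℕ) (hn : 2 ≤ n)
    (gPM : ℝ → ℝ)
    (hgPM : ∀ ω : ℝ, gPM ω =
      if ω ≤ d then
        ((-1) ^ n * ((n : ℝ) + 1) / d ^ (n + 1)) * (ω - d) ^ (n + 1) * (ω + d / ((n : ℝ) + 1)) + d
      else
        (-((n : ℝ) + 1) / (1 - d) ^ (n + 1)) * (ω - d) ^ (n + 1) *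
          (ω + (d - (n : ℝ) - 2) / ((n : ℝ) + 1)) + d) :
    MonotoneOn gPM (Set.Icc (0 : ℝ) 1) := by
  obtain ⟨hd0, hd1⟩ := hd
  have m1 := mono1 d hd0 n
  have m2 := mono2 d hd1 n
  have f1d : ((-1 : ℝ) ^ n * ((n : ℝ) + 1) / d ^ (n + 1)) * (d - d) ^ (n + 1) *
      (d + d / ((n : ℝ) + 1)) + d = d := by simp
  have f2d : (-((n : ℝ) + 1) / (1 - d) ^ (n + 1)) * (d - d) ^ (n + 1) *
      (d + (d - (n : ℝ) - 2) / ((n : ℝ) + 1)) + d = d := by simp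
  intro x hx y hy hxy
  rw [hgPM x, hgPM y]
  by_cases hxd : x ≤ d
  · by_cases hyd : y ≤ d
    · simp only [if_pos hxd, if_pos hyd]
      exact m1 ⟨hx.1, hxd⟩ ⟨hy.1, hyd⟩ hxy
    · push_neg at hyd
      simp only [if_pos hxd, if_neg (not_le.mpr hyd)]
      have h1 := m1 ⟨hx.1, hxd⟩ ⟨hd0.le, le_refl d⟩ hxd
      have h2 := m2 ⟨le_refl d, hd1.le⟩ ⟨hyd.le, hy.2⟩ hyd.le
      simp only at h1 h2
      rw [f1d] at h1
      rw [f2d] at h2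
      linarith
  · push_neg at hxd
    have hyd : ¬ y ≤ d := by push_neg; linarith
    simp only [if_neg (not_le.mpr hxd), if_neg hyd]
    exact m2 ⟨hxd.le, hx.2⟩ ⟨by push_neg at hyd; linarith, hy.2⟩ hxy
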